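/- Let G be a finite simple undirected graph and let p, u, v be distinct vertices that are pairwise non-adjacent. Suppose that κ(p,u) ≤ κ(p,v), that there exists a minimum pu-separator C (i.e., |C| = κ(p,u)) with v ∉ C that is not a pv-separator (i.e., there is a path in G from p to v avoiding C), and that there exists a minimum uv-separator not containing p. Then κ(u,v) = κ(p,u). -/
import Mathlib


/-- `C` is an `xy`-separator in the simple graph `G`: `x ∉ C`, `y ∉ C`, and every walk in
`G` from `x` to `y` passes through a vertex of `C`. -/
def IsSeparator {V : Type*} (G : SimpleGraph V) (x y : V) (C : Set V) : Prop :=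
  x ∉ C ∧ y ∉ C ∧ ∀ w : G.Walk x y, ∃ c ∈ C, c ∈ w.support

/-- For non-adjacent distinct vertices `x, y`, the vertex connectivity `κ(x,y)`: the
minimum cardinality of an `xy`-separator. -/
noncomputable def vertexConn {V : Type*} (G : SimpleGraph V) (x y : V) : ℕ :=
  sInf {n : ℕ | ∃ C : Set V, IsSeparator G x y C ∧ C.ncard = n}

/-- Let `p, u, v` be distinct, pairwise non-adjacent vertices of a finite
simple graph `G`. Suppose `κ(p,u) ≤ κ(p,v)`, there is a minimum `pu`-separator `C` with
`v ∉ C` that is not a `pv`-separator (some walk from `p` to `v` avoids `C`), and some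
minimum `uv`-separator avoids `p`. Then `κ(u,v) = κ(p,u)`. -/
theorem maxflow_determined {V : Type*} [Fintype V]
    (G : SimpleGraph V) (p u v : V)
    (hpu : p ≠ u) (hpv : p ≠ v) (huv : u ≠ v)
    (hapu : ¬ G.Adj p u) (hapv : ¬ G.Adj p v) (hauv : ¬ G.Adj u v)
    (hle : vertexConn G p u ≤ vertexConn G p v)
    (hCpu : ∃ C : Set V, IsSeparator G p u C ∧ C.ncard = vertexConn G p u ∧ v ∉ C ∧
      ∃ w : G.Walk p v, ∀ c ∈ C, c ∉ w.support)
    (hCuv : ∃ C : Set V, IsSeparator G u v C ∧ C.ncard = vertexConn G u v ∧ p ∉ C) :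
    vertexConn G u v = vertexConn G p u := by
  obtain ⟨C, hCsep, hCcard, hvC, w, hw⟩ := hCpu
  obtain ⟨D, hDsep, hDcard, hpD⟩ := hCuv
  -- C is a uv-separator
  have hCuvSep : IsSeparator G u v C := by
    refine ⟨hCsep.2.1, hvC, fun w' => ?_⟩
    by_contra h
    push_neg at h
    obtain ⟨c, hcC, hc⟩ := hCsep.2.2 (w.append w'.reverse)
    rcases (SimpleGraph.Walk.mem_support_append_iff _ _).1 hc with h1 | h2
    · exact hw c hcC h1
    · exact h c hcC (by simpa using h2)
  have h1 : vertexConn G u v ≤ vertexConn G p u := by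
    rw [← hCcard]
    exact Nat.sInf_le ⟨C, hCuvSep, rfl⟩
  refine le_antisymm h1 ?_
  by_cases hD : ∀ w' : G.Walk p u, ∃ c ∈ D, c ∈ w'.support
  · have : IsSeparator G p u D := ⟨hpD, hDsep.1, hD⟩
    calc vertexConn G p u ≤ D.ncard := Nat.sInf_le ⟨D, this, rfl⟩
      _ = vertexConn G u v := hDcard
  · push_neg at hD
    obtain ⟨w1, hw1⟩ := hD
    have hDpv : IsSeparator G p v D := by
      refine ⟨hpD, hDsep.2.1, fun w2 => ?_⟩
      by_contra h
      push_neg at h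
      obtain ⟨c, hcD, hc⟩ := hDsep.2.2 (w1.reverse.append w2)
      rcases (SimpleGraph.Walk.mem_support_append_iff _ _).1 hc with h1 | h2
      · exact hw1 c hcD (by simpa using h1)
      · exact h c hcD h2
    calc vertexConn G p u ≤ vertexConn G p v := hle
      _ ≤ D.ncard := Nat.sInf_le ⟨D, hDpv, rfl⟩
      _ = vertexConn G u v := hDcard
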